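/- arXiv:1507.06381 — 3 statements merged into one kernel-verified Lean document; each statement's English description precedes it below -/
import Mathlib

section
/- Let ι be a finite index set, let c_i (i ∈ ι) be pairwise distinct real numbers, and let λ be a complex number with λ ≠ c_i for all i. Then a pair (u, (û_i)_{i∈ι}) ∈ (dom A) × (⊕_i Ĥ_i) is an eigenvector of the multi-pole block operator matrix 𝒜 at λ if and only if u ≠ 0, A u − λ u − Σ_{i∈ι} (c_i − λ)⁻¹ B_i(B_i* u) = 0, and û_i = −(c_i − λ)⁻¹ B_i* u for every i ∈ ι. In particular λ is an eigenvalue of 𝒜 if and only if 0 is an eigenvalue of the rational operator function S(λ) = A − λ − Σ_i (c_i − λ)⁻¹ B_i B_i*. -/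
/-- Multi-pole case: for `λ` distinct from all the (pairwise distinct, real) poles `c i`,
a pair `(u, v)` is an eigenvector of the multi-pole block operator matrix `𝒜` at `λ`
iff `u ≠ 0`, `A u - λ u - ∑ i (c i - λ)⁻¹ B i (B i)* u = 0` and
`v i = -(c i - λ)⁻¹ (B i)* u` for all `i`; in particular `λ` is an eigenvalue of `𝒜`
iff `0` is an eigenvalue of `S(λ) = A - λ - ∑ i (c i - λ)⁻¹ B i (B i)*`. -/
theorem stmt_2
    {H : Type*} [NormedAddCommGroup H] [InnerProductSpace ℂ H] [CompleteSpace H]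
    {ι : Type*} [Fintype ι]
    (K : ι → Type*) [∀ i, NormedAddCommGroup (K i)] [∀ i, InnerProductSpace ℂ (K i)]
    [∀ i, CompleteSpace (K i)]
    (A : H →ₗ.[ℂ] H) (B : ∀ i, K i →L[ℂ] H)
    (c : ι → ℝ) (hc : Function.Injective c)
    (lam : ℂ) (hlam : ∀ i, lam ≠ (c i : ℂ)) :
    (∀ (u : A.domain) (v : ∀ i, K i),
      ((((u : H), v) ≠ 0 ∧
        A u + ∑ i, B i (v i) = lam • (u : H) ∧
        ∀ i, ContinuousLinearMap.adjoint (B i) (u : H) + (c i : ℂ) • v i = lam • v i)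
       ↔
       ((u : H) ≠ 0 ∧
        A u - lam • (u : H)
          - ∑ i, ((c i : ℂ) - lam)⁻¹ • B i (ContinuousLinearMap.adjoint (B i) (u : H)) = 0 ∧
        ∀ i, v i = -(((c i : ℂ) - lam)⁻¹) • ContinuousLinearMap.adjoint (B i) (u : H))))
    ∧
    ((∃ (u : A.domain) (v : ∀ i, K i), ((u : H), v) ≠ 0 ∧
        A u + ∑ i, B i (v i) = lam • (u : H) ∧
        ∀ i, ContinuousLinearMap.adjoint (B i) (u : H) + (c i : ℂ) • v i = lam • v i)
      ↔
     (∃ u : A.domain, (u : H) ≠ 0 ∧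
        A u - lam • (u : H)
          - ∑ i, ((c i : ℂ) - lam)⁻¹ • B i (ContinuousLinearMap.adjoint (B i) (u : H)) = 0)) := by
  have hd : ∀ i, ((c i : ℂ) - lam) ≠ 0 := fun i h => hlam i (sub_eq_zero.mp h).symm
  have main : ∀ (u : A.domain) (v : ∀ i, K i),
      ((((u : H), v) ≠ 0 ∧
        A u + ∑ i, B i (v i) = lam • (u : H) ∧
        ∀ i, ContinuousLinearMap.adjoint (B i) (u : H) + (c i : ℂ) • v i = lam • v i)
       ↔
       ((u : H) ≠ 0 ∧
        A u - lam • (u : H)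
          - ∑ i, ((c i : ℂ) - lam)⁻¹ • B i (ContinuousLinearMap.adjoint (B i) (u : H)) = 0 ∧
        ∀ i, v i = -(((c i : ℂ) - lam)⁻¹) • ContinuousLinearMap.adjoint (B i) (u : H))) := by
    intro u v
    have hv2 : ∀ i, (ContinuousLinearMap.adjoint (B i) (u : H) + (c i : ℂ) • v i = lam • v i)
        ↔ v i = -(((c i : ℂ) - lam)⁻¹) • ContinuousLinearMap.adjoint (B i) (u : H) := by
      intro i
      constructor
      · intro h
        have h1 : ((c i : ℂ) - lam) • v i = -(ContinuousLinearMap.adjoint (B i) (u : H)) := by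
          rw [sub_smul]
          rw [← h]
          abel
        calc v i = (((c i : ℂ) - lam))⁻¹ • (((c i : ℂ) - lam) • v i) := (inv_smul_smul₀ (hd i) _).symm
          _ = -(((c i : ℂ) - lam)⁻¹) • ContinuousLinearMap.adjoint (B i) (u : H) := by
            rw [h1, smul_neg, neg_smul]
      · intro h
        rw [h]
        have hdi := hd i
        match_scalars
        field_simp
        ring
    constructor
    · rintro ⟨hne, h1, h2⟩
      have hv : ∀ i, v i = -(((c i : ℂ) - lam)⁻¹) • ContinuousLinearMap.adjoint (B i) (u : H) :=
        fun i => (hv2 i).mp (h2 i)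
      have hu : (u : H) ≠ 0 := by
        intro hu0
        apply hne
        have hv0 : v = 0 := by
          funext i
          simp [hv i, hu0]
        simp [hu0, hv0]
      refine ⟨hu, ?_, hv⟩
      have hsum : ∑ i, B i (v i)
          = -∑ i, ((c i : ℂ) - lam)⁻¹ • B i (ContinuousLinearMap.adjoint (B i) (u : H)) := by
        rw [← Finset.sum_neg_distrib]
        refine Finset.sum_congr rfl fun i _ => ?_
        rw [hv i, map_smul, neg_smul]
      rw [hsum] at h1
      rw [← sub_eq_zero] at h1
      rw [← h1]
      abel
    · rintro ⟨hu, h1, hv⟩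
      have hne : (((u : H), v)) ≠ 0 := by
        intro h
        exact hu (congrArg Prod.fst h)
      refine ⟨hne, ?_, fun i => (hv2 i).mpr (hv i)⟩
      have hsum : ∑ i, B i (v i)
          = -∑ i, ((c i : ℂ) - lam)⁻¹ • B i (ContinuousLinearMap.adjoint (B i) (u : H)) := by
        rw [← Finset.sum_neg_distrib]
        refine Finset.sum_congr rfl fun i _ => ?_
        rw [hv i, map_smul, neg_smul]
      rw [hsum]
      rw [← sub_eq_zero] at h1 ⊢
      rw [← h1]
      abel
  refine ⟨main, ?_⟩
  constructor
  · rintro ⟨u, v, h⟩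
    obtain ⟨hu, h1, -⟩ := (main u v).mp h
    exact ⟨u, hu, h1⟩
  · rintro ⟨u, hu, h1⟩
    refine ⟨u, fun i => -(((c i : ℂ) - lam)⁻¹) • ContinuousLinearMap.adjoint (B i) (u : H), ?_⟩
    exact (main u _).mpr ⟨hu, h1, fun i => rfl⟩
end

section
/- Let b > 0, c ∈ ℝ and t ∈ ℝ with t ≠ c, and set δ_b(t) := b · tan((1/2) · arctan(2b/|t − c|)). Then (t + c)/2 − √(((t − c)/2)² + b²) = min(t, c) − δ_b(t) and (t + c)/2 + √(((t − c)/2)² + b²) = max(t, c) + δ_b(t). -/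
lemma tan_half_arctan (x : ℝ) :
    Real.tan ((1 / 2) * Real.arctan x) =
      Real.sin (Real.arctan x) / (1 + Real.cos (Real.arctan x)) := by
  set φ := (1 / 2) * Real.arctan x with hφ
  have h1 : -(Real.pi / 2) < Real.arctan x := Real.neg_pi_div_two_lt_arctan x
  have h2 : Real.arctan x < Real.pi / 2 := Real.arctan_lt_pi_div_two x
  have hφ1 : -(Real.pi / 2) < φ := by rw [hφ]; nlinarith [Real.pi_pos]
  have hφ2 : φ < Real.pi / 2 := by rw [hφ]; nlinarith [Real.pi_pos]
  have hcos : 0 < Real.cos φ := Real.cos_pos_of_mem_Ioo ⟨hφ1, hφ2⟩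
  have harc : Real.arctan x = 2 * φ := by rw [hφ]; ring
  rw [harc, Real.sin_two_mul, Real.cos_two_mul, Real.tan_eq_sin_div_cos]
  have h3 : 1 + (2 * Real.cos φ ^ 2 - 1) = 2 * Real.cos φ ^ 2 := by ring
  rw [h3]
  field_simp

/-- With `δ_b(t) = b · tan(½ arctan(2b/|t-c|))`, the roots of `(t-λ)(c-λ) = b²` are
`(t+c)/2 ∓ √(((t-c)/2)² + b²) = min(t,c) - δ_b(t)` and `max(t,c) + δ_b(t)`. -/
theorem stmt_9 (b c t : ℝ) (hb : 0 < b) (ht : t ≠ c) :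
    let δ := b * Real.tan ((1 / 2) * Real.arctan (2 * b / |t - c|))
    (t + c) / 2 - Real.sqrt (((t - c) / 2) ^ 2 + b ^ 2) = min t c - δ ∧
    (t + c) / 2 + Real.sqrt (((t - c) / 2) ^ 2 + b ^ 2) = max t c + δ := by
  intro δ
  have hd : 0 < |t - c| := abs_pos.mpr (sub_ne_zero.mpr ht)
  set d := |t - c| with hdef
  set x := 2 * b / d with hx
  have hxpos : 0 < x := by positivity
  have hs : (0:ℝ) < Real.sqrt (1 + x ^ 2) := Real.sqrt_pos.mpr (by positivity)
  set s := Real.sqrt (1 + x ^ 2) with hsdef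
  have hs2 : s ^ 2 = 1 + x ^ 2 := Real.sq_sqrt (by positivity)
  have htan : δ = b * (x / (s + 1)) := by
    show b * _ = _
    rw [tan_half_arctan, Real.sin_arctan, Real.cos_arctan]
    congr 1
    rw [← hsdef]
    field_simp [hd.ne']
    linear_combination (-2*b) * mul_inv_cancel₀ (hd.ne' : |t - c| ≠ 0)
  have hroot : Real.sqrt (((t - c) / 2) ^ 2 + b ^ 2) = d / 2 * s := by
    have h1 : ((t - c) / 2) ^ 2 + b ^ 2 = (d / 2 * s) ^ 2 := by
      have : ((t - c) / 2) ^ 2 = d ^ 2 / 4 := by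
        rw [hdef, sq_abs]; ring
      rw [this, mul_pow, hs2, hx]
      field_simp
      ring
    rw [h1, Real.sqrt_sq (by positivity)]
  have hδ : δ = d / 2 * s - d / 2 := by
    rw [htan]
    have hsp1 : s + 1 ≠ 0 := by positivity
    rw [mul_div_assoc', div_eq_iff hsp1]
    have hx2 : x ^ 2 = s ^ 2 - 1 := by linarith
    have hbx : b * x = d / 2 * x ^ 2 := by
      rw [hx]; field_simp
    rw [hbx, hx2]; ring
  rcases le_total t c with h | h
  · have hmin : min t c = t := min_eq_left h
    have hmax : max t c = c := max_eq_right h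
    have hdd : d = c - t := by rw [hdef, abs_sub_comm, abs_of_nonneg (by linarith)]
    rw [hroot, hδ, hmin, hmax, hdd]; constructor <;> ring
  · have hmin : min t c = c := min_eq_right h
    have hmax : max t c = t := max_eq_left h
    have hdd : d = t - c := by rw [hdef, abs_of_nonneg (by linarith)]
    rw [hroot, hδ, hmin, hmax, hdd]; constructor <;> ring
end

section
/- Let μ, c, ν ∈ ℝ with μ ≤ c < ν, and let b > 0. Then b · tan((1/2) · arctan(2b/(ν − c))) < c − μ if and only if b² < (c − μ)² + (c − μ)(ν − c), i.e., if and only if b < √((c − μ)² + (c − μ)(ν − c)). -/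
open Real

/-- Key computation: for `d > 0`, `b > 0`,
`b * tan ((1/2) * arctan (2b/d)) = (√(d² + 4b²) - d) / 2`. -/
lemma half_arctan_val {b d : ℝ} (hb : 0 < b) (hd : 0 < d) :
    b * Real.tan ((1 / 2) * Real.arctan (2 * b / d)) =
      (Real.sqrt (d ^ 2 + 4 * b ^ 2) - d) / 2 := by
  set φ : ℝ := (1 / 2) * Real.arctan (2 * b / d) with hφ
  have harg : 0 < 2 * b / d := by positivity
  have hθpos : 0 < Real.arctan (2 * b / d) := by
    rw [← Real.arctan_zero]; exact Real.arctan_strictMono harg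
  have hθlt : Real.arctan (2 * b / d) < π / 2 := Real.arctan_lt_pi_div_two _
  have hφpos : 0 < φ := by rw [hφ]; positivity
  have hφlt : φ < π / 4 := by rw [hφ]; linarith
  set t : ℝ := Real.tan φ with ht
  have htpos : 0 < t :=
    Real.tan_pos_of_pos_of_lt_pi_div_two hφpos (by linarith [Real.pi_pos])
  have htlt : t < 1 := by
    have := Real.tan_lt_tan_of_nonneg_of_lt_pi_div_two hφpos.le
      (by linarith [Real.pi_pos]) hφlt
    rwa [Real.tan_pi_div_four] at this
  have hdouble : Real.tan (2 * φ) = 2 * t / (1 - t ^ 2) := Real.tan_two_mul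
  have h2φ : 2 * φ = Real.arctan (2 * b / d) := by rw [hφ]; ring
  have htan : 2 * b / d = 2 * t / (1 - t ^ 2) := by
    rw [← hdouble, h2φ, Real.tan_arctan]
  have h1t : (0:ℝ) < 1 - t ^ 2 := by nlinarith
  have hkey : b * (1 - t ^ 2) = d * t := by
    field_simp at htan
    nlinarith [htan]
  have hsq : (2 * b * t + d) ^ 2 = d ^ 2 + 4 * b ^ 2 := by nlinarith
  have hsqrt : Real.sqrt (d ^ 2 + 4 * b ^ 2) = 2 * b * t + d := by
    rw [← hsq]
    exact Real.sqrt_sq (by positivity)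
  rw [hsqrt]; ring

/-- For `μ ≤ c < ν` and `b > 0`: `b · tan(½ arctan(2b/(ν-c))) < c - μ` iff
`b² < (c-μ)² + (c-μ)(ν-c)`, i.e. iff `b < √((c-μ)² + (c-μ)(ν-c))`. -/
theorem stmt_12 (μ c ν b : ℝ) (h1 : μ ≤ c) (h2 : c < ν) (hb : 0 < b) :
    (b * Real.tan ((1 / 2) * Real.arctan (2 * b / (ν - c))) < c - μ ↔
      b ^ 2 < (c - μ) ^ 2 + (c - μ) * (ν - c)) ∧
    (b * Real.tan ((1 / 2) * Real.arctan (2 * b / (ν - c))) < c - μ ↔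
      b < Real.sqrt ((c - μ) ^ 2 + (c - μ) * (ν - c))) := by
  have hd : 0 < ν - c := by linarith
  have hm : 0 ≤ c - μ := by linarith
  rw [half_arctan_val hb hd]
  have h1' : (Real.sqrt ((ν - c) ^ 2 + 4 * b ^ 2) - (ν - c)) / 2 < c - μ ↔
      b ^ 2 < (c - μ) ^ 2 + (c - μ) * (ν - c) := by
    rw [div_lt_iff₀ (by norm_num : (0:ℝ) < 2), sub_lt_iff_lt_add]
    have h2m : 0 < (c - μ) * 2 + (ν - c) := by linarith
    rw [Real.sqrt_lt' h2m]
    constructor <;> intro h <;> nlinarith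
  refine ⟨h1', h1'.trans ?_⟩
  rw [Real.lt_sqrt hb.le]
end
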